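/- Let c, m > 0 and θ ∈ ℝ, and define γ : ℝ → ℝ³ by γ(s) = m·e^{(cos θ/√(1+c²))·s}·(c·cos((sin θ/c)·s), c·sin((sin θ/c)·s), 1). Then for all s: ⟨γ'(s), γ(s)⟩_{H,γ(s)}/‖γ(s)‖_{H,γ(s)} = cos θ and ⟨γ'(s), W(γ(s))⟩_{H,γ(s)}/‖W(γ(s))‖_{H,γ(s)} = sin θ, where W(p) = (−p₂, p₁, 0). Hence γ is simultaneously a helix with axis the hyperbolic-rotation Killing field V(p) = p and angle θ, and a helix with axis the elliptic-rotation Killing field W and complementary angle π/2 − θ. -/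

import Mathlib

open Real
open scoped RealInnerProductSpace

/-- A point/vector of Euclidean 3-space. -/
noncomputable def v3 (x y z : ℝ) : EuclideanSpace ℝ (Fin 3) := !₂[x, y, z]

/-- The rotational Killing vector field W(p) = (−p₂, p₁, 0). -/
noncomputable def W (p : EuclideanSpace ℝ (Fin 3)) : EuclideanSpace ℝ (Fin 3) :=
  v3 (-(p 1)) (p 0) 0

/-- Hyperbolic (upper half-space) inner product of u and v at the point p. -/
noncomputable def hInner (p u v : EuclideanSpace ℝ (Fin 3)) : ℝ := ⟪u, v⟫ / (p 2) ^ 2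

/-- Hyperbolic (upper half-space) norm of v at the point p. -/
noncomputable def hNorm (p v : EuclideanSpace ℝ (Fin 3)) : ℝ := ‖v‖ / p 2

/-- Covariant acceleration ∇_{γ'}γ' of a hyperbolic unit-speed curve in the
upper half-space model: A(s) = γ''(s) − (2γ₃'(s)/γ₃(s))·γ'(s) + (‖γ'(s)‖ₑ²/γ₃(s))·e₃. -/
noncomputable def hAccel (γ : ℝ → EuclideanSpace ℝ (Fin 3)) (s : ℝ) :
    EuclideanSpace ℝ (Fin 3) :=
  deriv (deriv γ) s - (2 * deriv (fun t => γ t 2) s / γ s 2) • deriv γ s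
    + (‖deriv γ s‖ ^ 2 / γ s 2) • v3 0 0 1


lemma v3_zero (x y z : ℝ) : v3 x y z 0 = x := rfl
lemma v3_one (x y z : ℝ) : v3 x y z 1 = y := rfl
lemma v3_two (x y z : ℝ) : v3 x y z 2 = z := rfl

lemma smul_v3 (r x y z : ℝ) : r • v3 x y z = v3 (r*x) (r*y) (r*z) := by
  ext i; fin_cases i <;> simp [v3]

lemma inner_v3 (x y z x' y' z' : ℝ) :
    ⟪v3 x y z, v3 x' y' z'⟫ = x*x' + y*y' + z*z' := by
  simp [v3, PiLp.inner_apply, Fin.sum_univ_three]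
  ring

lemma norm_v3 (x y z : ℝ) : ‖v3 x y z‖ = Real.sqrt (x^2 + y^2 + z^2) := by
  rw [EuclideanSpace.norm_eq]
  congr 1
  simp [v3, Fin.sum_univ_three, sq]

lemma hasDerivAt_v3 {x y z : ℝ → ℝ} {x' y' z' s : ℝ}
    (hx : HasDerivAt x x' s) (hy : HasDerivAt y y' s) (hz : HasDerivAt z z' s) :
    HasDerivAt (fun t => v3 (x t) (y t) (z t)) (v3 x' y' z') s := by
  rw [show (fun t => v3 (x t) (y t) (z t)) =
      (fun t => x t • v3 1 0 0 + y t • v3 0 1 0 + z t • v3 0 0 1) from ?_,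
    show v3 x' y' z' = x' • v3 1 0 0 + y' • v3 0 1 0 + z' • v3 0 0 1 from ?_]
  · exact ((hx.smul_const _).add (hy.smul_const _)).add (hz.smul_const _)
  · simp [smul_v3]; ext i; fin_cases i <;> simp [v3]
  · funext t; simp [smul_v3]; ext i; fin_cases i <;> simp [v3]

lemma arith1 (a b c f S cb sb : ℝ) (hf : 0 < f) (hS : 0 < S)
    (hS2 : S^2 = 1 + c^2) (pyth : cb^2 + sb^2 = 1) :
    ((a*f*(c*cb) + f*(-(c*b*sb))) * (f*(c*cb)) + (a*f*(c*sb) + f*(c*b*cb)) * (f*(c*sb))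
        + (a*f)*f) / f^2 /
      (Real.sqrt ((f*(c*cb))^2 + (f*(c*sb))^2 + f^2) / f) = a * S := by
  have hn : (f*(c*cb))^2 + (f*(c*sb))^2 + f^2 = (f*S)^2 := by
    linear_combination (f^2*c^2)*pyth - f^2*hS2
  have hnum : (a*f*(c*cb) + f*(-(c*b*sb))) * (f*(c*cb)) + (a*f*(c*sb) + f*(c*b*cb)) * (f*(c*sb))
      + (a*f)*f = a*f^2*S^2 := by
    linear_combination (a*f^2*c^2)*pyth - a*f^2*hS2
  rw [hn, Real.sqrt_sq (by positivity), hnum]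
  field_simp

lemma arith2 (a b c f cb sb : ℝ) (hf : 0 < f) (hc : 0 < c) (pyth : cb^2 + sb^2 = 1) :
    ((a*f*(c*cb) + f*(-(c*b*sb))) * (-(f*(c*sb))) + (a*f*(c*sb) + f*(c*b*cb)) * (f*(c*cb))
        + (a*f)*0) / f^2 /
      (Real.sqrt ((-(f*(c*sb)))^2 + (f*(c*cb))^2 + 0^2) / f) = b * c := by
  have hn : (-(f*(c*sb)))^2 + (f*(c*cb))^2 + 0^2 = (f*c)^2 := by
    linear_combination (f^2*c^2)*pyth
  have hnum : (a*f*(c*cb) + f*(-(c*b*sb))) * (-(f*(c*sb))) + (a*f*(c*sb) + f*(c*b*cb)) * (f*(c*cb))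
      + (a*f)*0 = b*f^2*c^2 := by
    linear_combination (b*f^2*c^2)*pyth
  rw [hn, Real.sqrt_sq (by positivity), hnum]
  field_simp


/-- The helix γ(s) = m·e^{(cos θ/√(1+c²))s}·(c cos((sin θ/c)s),
c sin((sin θ/c)s), 1) makes constant hyperbolic angle θ with the hyperbolic-rotation
Killing field V(p) = p and simultaneously the complementary constant hyperbolic angle
π/2 − θ with the elliptic-rotation Killing field W. -/
theorem stmt_14 (c m θ : ℝ) (hc : 0 < c) (hm : 0 < m)
    (γ : ℝ → EuclideanSpace ℝ (Fin 3))
    (hγ : γ = fun s => (m * Real.exp ((Real.cos θ / Real.sqrt (1 + c ^ 2)) * s)) •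
        v3 (c * Real.cos ((Real.sin θ / c) * s)) (c * Real.sin ((Real.sin θ / c) * s)) 1) :
    (∀ s, hInner (γ s) (deriv γ s) (γ s) / hNorm (γ s) (γ s) = Real.cos θ) ∧
    (∀ s, hInner (γ s) (deriv γ s) (W (γ s)) / hNorm (γ s) (W (γ s)) = Real.sin θ) := by
  set a : ℝ := Real.cos θ / Real.sqrt (1 + c ^ 2) with ha
  set b : ℝ := Real.sin θ / c with hb
  set S : ℝ := Real.sqrt (1 + c ^ 2) with hSdef
  have hS : 0 < S := Real.sqrt_pos.2 (by positivity)
  have hS2 : S ^ 2 = 1 + c ^ 2 := Real.sq_sqrt (by positivity)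
  have haS : a * S = Real.cos θ := div_mul_cancel₀ _ hS.ne'
  have hbc : b * c = Real.sin θ := div_mul_cancel₀ _ hc.ne'
  have main : ∀ s : ℝ, ∃ f cb sb : ℝ, 0 < f ∧ cb^2 + sb^2 = 1 ∧
      γ s = v3 (f * (c * cb)) (f * (c * sb)) f ∧
      deriv γ s = v3 (a * f * (c * cb) + f * (-(c * b * sb)))
        (a * f * (c * sb) + f * (c * b * cb)) (a * f) := by
    intro s
    refine ⟨m * Real.exp (a * s), Real.cos (b * s), Real.sin (b * s), by positivity, ?_, ?_, ?_⟩
    · rw [add_comm]; exact Real.sin_sq_add_cos_sq (b * s)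
    · rw [hγ]; simp only [smul_v3, mul_one]
    · refine HasDerivAt.deriv ?_
      have hfd : HasDerivAt (fun t => m * Real.exp (a * t)) (a * (m * Real.exp (a * s))) s := by
        have h1 : HasDerivAt (fun t : ℝ => a * t) a s := by
          simpa using (hasDerivAt_id s).const_mul a
        have h2 := (h1.exp).const_mul m
        exact h2.congr_deriv (by ring)
      have hcd : HasDerivAt (fun t => c * Real.cos (b * t)) (-(c * b * Real.sin (b * s))) s := by
        have h1 : HasDerivAt (fun t : ℝ => b * t) b s := by
          simpa using (hasDerivAt_id s).const_mul b
        have h2 := (h1.cos).const_mul c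
        exact h2.congr_deriv (by ring)
      have hsd : HasDerivAt (fun t => c * Real.sin (b * t)) (c * b * Real.cos (b * s)) s := by
        have h1 : HasDerivAt (fun t : ℝ => b * t) b s := by
          simpa using (hasDerivAt_id s).const_mul b
        have h2 := (h1.sin).const_mul c
        exact h2.congr_deriv (by ring)
      have hx := hfd.mul hcd
      have hy := hfd.mul hsd
      have hfun : (fun t => (m * Real.exp (a * t)) •
          v3 (c * Real.cos (b * t)) (c * Real.sin (b * t)) 1) =
          fun t => v3 ((m * Real.exp (a * t)) * (c * Real.cos (b * t)))
            ((m * Real.exp (a * t)) * (c * Real.sin (b * t))) (m * Real.exp (a * t)) := by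
        funext t; rw [smul_v3, mul_one]
      rw [hγ, hfun]
      have hD := hasDerivAt_v3 hx hy hfd
      exact hD
  constructor
  · intro s
    obtain ⟨f, cb, sb, hf, pyth, hγs, hd⟩ := main s
    rw [hInner, hNorm, hγs, hd, inner_v3, norm_v3, v3_two, ← haS]
    exact arith1 a b c f S cb sb hf hS hS2 pyth
  · intro s
    obtain ⟨f, cb, sb, hf, pyth, hγs, hd⟩ := main s
    have hW : W (γ s) = v3 (-(f * (c * sb))) (f * (c * cb)) 0 := by
      rw [W, hγs, v3_zero, v3_one]
    rw [hInner, hNorm, hd, hW, hγs, inner_v3, norm_v3, v3_two, ← hbc]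
    exact arith2 a b c f cb sb hf hc pyth
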